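/- arXiv:2412.04145 — 2 statements merged into one kernel-verified Lean document; each statement's English description precedes it below -/
import Mathlib

section
/- Let (T,β) be a tree decomposition of a graph G, let Z ⊆ V(G), let π : V(G) → V(G/Z) be the quotient map of the contraction of G to G/Z, and let (T,β*) be the induced tree decomposition of G/Z where β*(t) = π(β(t)). Then for every node t of T, the adhesion in (T,β*) satisfies σ*(t) = π(σ(t)), where σ(t) is the adhesion of t in (T,β). -/
/-- A rooted tree decomposition of a graph `G`.  The rooted tree on the index type `ι` is
given by a parent function together with a root which every node reaches by iterating
`parent`.  The bags satisfy the usual covering, edge and (subtree-)connectivity axioms;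
the connectivity axiom is phrased for rooted trees: if `v` lies in the bag of `t` but not
in the bag of its parent (and `t` is not the root), then every node whose bag contains `v`
is a descendant of `t`. -/
structure RootedTreeDecomp (V : Type*) (ι : Type*) (G : SimpleGraph V) where
  parent : ι → ι
  root : ι
  parent_root : parent root = root
  reaches_root : ∀ t : ι, ∃ n : ℕ, parent^[n] t = root
  bag : ι → Set V
  bag_cover : ∀ v : V, ∃ t : ι, v ∈ bag t
  bag_edge : ∀ ⦃u v : V⦄, G.Adj u v → ∃ t : ι, u ∈ bag t ∧ v ∈ bag t
  bag_conn : ∀ (v : V) (t : ι), v ∈ bag t → t ≠ root → v ∉ bag (parent t) →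
      ∀ s : ι, v ∈ bag s → ∃ n : ℕ, parent^[n] s = t

namespace RootedTreeDecomp

variable {V ι : Type*} {G : SimpleGraph V}

open Classical

/-- The adhesion `σ(t) = β(t) ∩ β(parent t)`, with `σ(root) = ∅`. -/
noncomputable def adhesion (D : RootedTreeDecomp V ι G) (t : ι) : Set V :=
  if t = D.root then ∅ else D.bag t ∩ D.bag (D.parent t)

/-- `s` is a child of `t` in the rooted tree. -/
def IsChild (D : RootedTreeDecomp V ι G) (s t : ι) : Prop :=
  s ≠ D.root ∧ D.parent s = t

/-- The set `γ(t)`: the union of the bags over the subtree rooted at `t`. -/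
def subtreeBags (D : RootedTreeDecomp V ι G) (t : ι) : Set V :=
  ⋃ s ∈ {s : ι | ∃ n : ℕ, D.parent^[n] s = t}, D.bag s

/-- The torso of a node `t`: the graph on the bag `β(t)` (as a graph with vertex set `V`,
with all edges inside `β(t)`) obtained from `G[β(t)]` by making the adhesion `σ(s)` of every
child `s` of `t` into a clique. -/
def torso (D : RootedTreeDecomp V ι G) (t : ι) : SimpleGraph V where
  Adj u v := u ≠ v ∧ u ∈ D.bag t ∧ v ∈ D.bag t ∧
    (G.Adj u v ∨ ∃ s : ι, D.IsChild s t ∧ u ∈ D.adhesion s ∧ v ∈ D.adhesion s)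
  symm := ⟨by
    rintro u v ⟨hne, hu, hv, h⟩
    refine ⟨hne.symm, hv, hu, ?_⟩
    rcases h with h | ⟨s, hs, h1, h2⟩
    · exact Or.inl h.symm
    · exact Or.inr ⟨s, hs, h2, h1⟩⟩
  loopless := ⟨fun u h => h.1 rfl⟩

end RootedTreeDecomp

/-- `u` and `v` lie in the same connected component of `G[Z]`. -/
def ReachIn {V : Type*} (G : SimpleGraph V) (Z : Set V) (u v : V) : Prop :=
  ∃ (hu : u ∈ Z) (hv : v ∈ Z), (G.induce Z).Reachable ⟨u, hu⟩ ⟨v, hv⟩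

/-- `G'` is obtained from `G` by contracting edges, with quotient map `π` : `π` is
surjective, each fibre induces a connected subgraph of `G`, and two distinct vertices of
`G'` are adjacent exactly when some edge of `G` joins the corresponding fibres. -/
def IsContraction {V V' : Type*} (G : SimpleGraph V) (G' : SimpleGraph V') (π : V → V') :
    Prop :=
  Function.Surjective π ∧
  (∀ a : V', (G.induce (π ⁻¹' {a})).Connected) ∧
  (∀ a b : V', G'.Adj a b ↔ a ≠ b ∧ ∃ u v : V, G.Adj u v ∧ π u = a ∧ π v = b)

/-- `G'` is the graph `G/Z` obtained from `G` by contracting every connected component of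
`G[Z]` to a single vertex, with quotient map `π`: additionally to being a contraction, `π`
identifies two vertices exactly when they coincide or lie in the same connected component
of `G[Z]`. -/
def IsComponentContraction {V V' : Type*} (G : SimpleGraph V) (Z : Set V)
    (G' : SimpleGraph V') (π : V → V') : Prop :=
  Function.Surjective π ∧
  (∀ u v : V, π u = π v ↔ u = v ∨ ReachIn G Z u v) ∧
  (∀ a b : V', G'.Adj a b ↔ a ≠ b ∧ ∃ u v : V, G.Adj u v ∧ π u = a ∧ π v = b)

section AuxLemmas
variable {V ι : Type*} {G : SimpleGraph V}

lemma aux_iter_root (D : RootedTreeDecomp V ι G) (n : ℕ) :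
    D.parent^[n] D.root = D.root := by
  induction n with
  | zero => rfl
  | succ n ih => rw [Function.iterate_succ_apply', ih, D.parent_root]

lemma aux_not_desc_parent (D : RootedTreeDecomp V ι G) {t : ι} (ht : t ≠ D.root) :
    ¬ ∃ n, D.parent^[n] (D.parent t) = t := by
  rintro ⟨n, hn⟩
  have hcyc : D.parent^[n+1] t = t := by rwa [Function.iterate_succ_apply]
  obtain ⟨m, hm⟩ := D.reaches_root t
  have hk : ∀ k, D.parent^[k*(n+1)] t = t := by
    intro k; induction k with
    | zero => simp
    | succ k ih => rw [Nat.succ_mul, Function.iterate_add_apply, hcyc, ih]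
  apply ht
  have h1 : D.parent^[(m+1)*(n+1)] t = t := hk _
  have hle : m + 1 ≤ (m+1)*(n+1) := Nat.le_mul_of_pos_right (m+1) (Nat.succ_pos n)
  have h2 : (m+1)*(n+1) = ((m+1)*(n+1) - m) + m := by omega
  rw [h2, Function.iterate_add_apply, hm, aux_iter_root] at h1
  exact h1.symm

/-- Lemma A: a vertex lying in the bag of a descendant of `t` and in the bag of a
non-descendant of `t` belongs to the adhesion `β(t) ∩ β(parent t)` (for `t ≠ root`). -/
lemma aux_sep (D : RootedTreeDecomp V ι G) {t : ι} (ht : t ≠ D.root) {v : V}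
    {s' : ι} (hs' : ∃ n, D.parent^[n] s' = t) (hv' : v ∈ D.bag s')
    {s : ι} (hs : ¬ ∃ n, D.parent^[n] s = t) (hv : v ∈ D.bag s) :
    v ∈ D.bag t ∩ D.bag (D.parent t) := by
  obtain ⟨n, hn⟩ := hs'
  have key : ∀ n (s' : ι), D.parent^[n] s' = t → v ∈ D.bag s' → v ∈ D.bag t := by
    intro n
    induction n with
    | zero => intro s' hn hvb; rwa [← hn]
    | succ n ih =>
      intro s' hn hvb
      by_cases hroot : s' = D.root
      · exfalso; apply ht
        rw [hroot] at hn; rw [← hn, aux_iter_root]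
      by_cases hpb : v ∈ D.bag (D.parent s')
      · exact ih (D.parent s') (by rwa [← Function.iterate_succ_apply]) hpb
      · exfalso
        obtain ⟨m, hm⟩ := D.bag_conn v s' hvb hroot hpb s hv
        apply hs
        refine ⟨n + 1 + m, ?_⟩
        rw [Function.iterate_add_apply, hm, hn]
  have hbt : v ∈ D.bag t := key n s' hn hv'
  refine ⟨hbt, ?_⟩
  by_cases hpb : v ∈ D.bag (D.parent t)
  · exact hpb
  · exfalso
    exact hs (D.bag_conn v t hbt ht hpb s hv)

/-- Walk induction: along a walk inside `G[Z]` starting at a vertex in a descendant bag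
and ending at a vertex in a non-descendant bag, some vertex lies in the adhesion. -/
lemma aux_walk {V' : Type*} (D : RootedTreeDecomp V ι G) {t : ι} (ht : t ≠ D.root)
    {Z : Set V} (π : V → V')
    (hπ : ∀ u v : V, π u = π v ↔ u = v ∨ ReachIn G Z u v)
    (a : V') :
    ∀ {x y : {w // w ∈ Z}} (_ : (G.induce Z).Walk x y),
      (∃ s', (∃ n, D.parent^[n] s' = t) ∧ (x : V) ∈ D.bag s') →
      (∃ s, ¬ (∃ n, D.parent^[n] s = t) ∧ (y : V) ∈ D.bag s) →
      π (x : V) = a →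
      ∃ w ∈ D.bag t ∩ D.bag (D.parent t), π w = a := by
  intro x y p
  induction p with
  | nil =>
    rintro ⟨s', hs', hx'⟩ ⟨s, hs, hx⟩ hπx
    exact ⟨_, aux_sep D ht hs' hx' hs hx, hπx⟩
  | @cons x x' y hadj p ih =>
    rintro ⟨s', hs', hx'⟩ hy hπx
    by_cases hnd : ∃ s, ¬ (∃ n, D.parent^[n] s = t) ∧ (x : V) ∈ D.bag s
    · obtain ⟨s, hs, hx⟩ := hnd
      exact ⟨_, aux_sep D ht hs' hx' hs hx, hπx⟩
    · have hG : G.Adj (x : V) (x' : V) := hadj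
      obtain ⟨s'', hxs, hx's⟩ := D.bag_edge hG
      have hdesc : ∃ n, D.parent^[n] s'' = t := by
        by_contra hcon
        exact hnd ⟨s'', hcon, hxs⟩
      have hπx' : π (x' : V) = a := by
        rw [← hπx, hπ]
        exact Or.inr ⟨x'.2, x.2, (SimpleGraph.Adj.reachable hadj).symm⟩
      exact ih ⟨s'', hdesc, hx's⟩ hy hπx'

end AuxLemmas

/-- Let `(T,β)` be a tree decomposition of `G`, let `Z ⊆ V(G)`, let
`π : V(G) → V(G/Z)` be the quotient map of the contraction of `G` to `G/Z`, and let
`(T,β*)` be the induced tree decomposition of `G/Z` with `β*(t) = π(β(t))` (same tree,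
same root).  Then for every node `t`, the adhesion of `(T,β*)` satisfies
`σ*(t) = π(σ(t))`. -/
theorem induced_decomposition_adhesion_eq_image
    {V V' ι : Type*} {G : SimpleGraph V} (D : RootedTreeDecomp V ι G)
    (Z : Set V) (G' : SimpleGraph V') (π : V → V')
    (hc : IsComponentContraction G Z G' π)
    (D' : RootedTreeDecomp V' ι G')
    (hp : D'.parent = D.parent) (hr : D'.root = D.root)
    (hb : ∀ t : ι, D'.bag t = π '' D.bag t) :
    ∀ t : ι, D'.adhesion t = π '' D.adhesion t := by
  intro t
  unfold RootedTreeDecomp.adhesion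
  by_cases ht : t = D.root
  · rw [if_pos (ht.trans hr.symm), if_pos ht, Set.image_empty]
  · rw [if_neg (fun h => ht (h.trans hr)), if_neg ht, hp]
    apply Set.Subset.antisymm
    · rintro a ⟨ha1, ha2⟩
      rw [hb] at ha1 ha2
      obtain ⟨u, hu, hπu⟩ := ha1
      obtain ⟨v, hv, hπv⟩ := ha2
      have huv : π u = π v := hπu.trans hπv.symm
      rw [hc.2.1] at huv
      rcases huv with rfl | ⟨huZ, hvZ, hreach⟩
      · exact ⟨u, ⟨hu, hv⟩, hπu⟩
      · obtain ⟨p⟩ := hreach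
        obtain ⟨w, hw, hπw⟩ := aux_walk D ht π hc.2.1 a p ⟨t, ⟨0, rfl⟩, hu⟩
          ⟨D.parent t, aux_not_desc_parent D ht, hv⟩ hπu
        exact ⟨w, hw, hπw⟩
    · rintro a ⟨w, ⟨hw1, hw2⟩, rfl⟩
      rw [hb, hb]
      exact ⟨⟨w, hw1, rfl⟩, ⟨w, hw2, rfl⟩⟩
end

section
/- Let (T,β) be a rooted tree decomposition of G, let Z₁,…,Z_p be a partition of V(G), fix i and Z' ⊆ Z_i, and suppose that for every node t and every edge uv of tor(t)[Z_i ∩ β(t)], the vertices u and v lie in the same connected component of G[((γ(s) \ σ(s)) ∩ Z_i) ∪ {u,v}] for every child s of t with u,v ∈ σ(s). If additionally adhesions have size at most h, then for every node t, the number of edges uv of tor(t)[(Z_i ∩ β(t)) \ Z'] whose endpoints lie in different connected components of G[Z_i \ Z'] is at most h² · |Z'|. -/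
/-- `u` and `v` lie in the same connected component of `G[A]`. -/
def SameComp {V : Type*} (G : SimpleGraph V) (A : Set V) (u v : V) : Prop :=
  ∃ (hu : u ∈ A) (hv : v ∈ A), (G.induce A).Reachable ⟨u, hu⟩ ⟨v, hv⟩


namespace RootedTreeDecompAux

open RootedTreeDecomp

variable {V ι : Type*} {G : SimpleGraph V}

lemma iterate_root (D : RootedTreeDecomp V ι G) (n : ℕ) : D.parent^[n] D.root = D.root := by
  induction n with
  | zero => rfl
  | succ n ih => rw [Function.iterate_succ_apply', ih, D.parent_root]

lemma eq_root_of_periodic (D : RootedTreeDecomp V ι G) {t : ι} {m : ℕ} (hm : 0 < m)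
    (h : D.parent^[m] t = t) : t = D.root := by
  obtain ⟨N, hN⟩ := D.reaches_root t
  have key : ∀ k, D.parent^[m * k] t = t := by
    intro k
    induction k with
    | zero => rfl
    | succ k ih =>
      rw [Nat.mul_succ, Function.iterate_add_apply, h, ih]
  have h1 : D.parent^[m * N] t = t := key N
  have h2 : m * N = (m * N - N) + N := by
    have : N ≤ m * N := Nat.le_mul_of_pos_left N hm
    omega
  rw [h2, Function.iterate_add_apply, hN, iterate_root] at h1
  exact h1.symm

lemma desc_of_mem (D : RootedTreeDecomp V ι G) {s t : ι} (hst : D.IsChild s t) {v : V}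
    (hv : v ∈ D.subtreeBags s) (hns : v ∉ D.adhesion s) :
    ∀ u : ι, v ∈ D.bag u → ∃ n, D.parent^[n] u = s := by
  classical
  obtain ⟨w, hw⟩ : ∃ w, (∃ n, D.parent^[n] w = s) ∧ v ∈ D.bag w := by
    simpa [RootedTreeDecomp.subtreeBags] using hv
  obtain ⟨⟨n, hn⟩, hvw⟩ := hw
  set P : ℕ → Prop := fun m => v ∈ D.bag (D.parent^[m] w) with hP
  have hP0 : P 0 := hvw
  set m₀ := Nat.findGreatest P n with hm₀
  have hPm : P m₀ := Nat.findGreatest_spec (Nat.zero_le n) hP0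
  have hle : m₀ ≤ n := Nat.findGreatest_le n
  by_cases hmn : m₀ = n
  · have hvs : v ∈ D.bag s := by rw [← hn, ← hmn]; exact hPm
    have hsr : s ≠ D.root := hst.1
    have hnp : v ∉ D.bag (D.parent s) := by
      intro hvp
      apply hns
      simp only [RootedTreeDecomp.adhesion, if_neg hsr]
      exact ⟨hvs, hvp⟩
    exact fun u hu => D.bag_conn v s hvs hsr hnp u hu
  · have hlt : m₀ < n := lt_of_le_of_ne hle hmn
    set w' := D.parent^[m₀] w with hw'
    have hiter : D.parent^[n - m₀] w' = s := by
      rw [hw', ← Function.iterate_add_apply]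
      rw [show n - m₀ + m₀ = n by omega]
      exact hn
    have hw'root : w' ≠ D.root := by
      intro hwr
      apply hst.1
      rw [← hiter, hwr, iterate_root]
    have hnot : v ∉ D.bag (D.parent w') := by
      have hng : ¬ P (m₀ + 1) :=
        Nat.findGreatest_is_greatest (Nat.lt_succ_self m₀) hlt
      intro hvb
      apply hng
      show v ∈ D.bag (D.parent^[m₀+1] w)
      rw [Function.iterate_succ_apply']
      exact hvb
    intro u hu
    obtain ⟨k, hk⟩ := D.bag_conn v w' hPm hw'root hnot u hu
    exact ⟨(n - m₀) + k, by rw [Function.iterate_add_apply, hk, hiter]⟩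

lemma disj_children (D : RootedTreeDecomp V ι G) {t s₁ s₂ : ι}
    (h1 : D.IsChild s₁ t) (h2 : D.IsChild s₂ t) (hne : s₁ ≠ s₂) {v : V}
    (hv1 : v ∈ D.subtreeBags s₁ \ D.adhesion s₁) :
    v ∉ D.subtreeBags s₂ \ D.adhesion s₂ := by
  rintro ⟨hγ2, hσ2⟩
  obtain ⟨hγ1, hσ1⟩ := hv1
  have d1 := desc_of_mem D h1 hγ1 hσ1
  have d2 := desc_of_mem D h2 hγ2 hσ2
  obtain ⟨w, hw⟩ : ∃ w, (∃ n, D.parent^[n] w = s₁) ∧ v ∈ D.bag w := by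
    simpa [RootedTreeDecomp.subtreeBags] using hγ1
  obtain ⟨a, ha⟩ := d1 w hw.2
  obtain ⟨b, hb⟩ := d2 w hw.2
  have claim : ∀ {x y : ι} (a b : ℕ), a ≤ b → D.parent^[a] w = x → D.parent^[b] w = y →
      D.IsChild x t → D.IsChild y t → x = y := by
    intro x y a b hab hax hby hx hy
    have hxy : D.parent^[b - a] x = y := by
      rw [← hax, ← Function.iterate_add_apply, show b - a + a = b by omega, hby]
    rcases Nat.eq_zero_or_pos (b - a) with hz | hpos
    · rw [hz] at hxy; exact hxy
    · exfalso
      obtain ⟨c, hc⟩ := Nat.exists_eq_add_of_lt hpos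
      rw [show b - a = c + 1 by omega] at hxy
      rw [Function.iterate_succ_apply, hx.2] at hxy
      have hper : D.parent^[c + 1] t = t := by
        rw [Function.iterate_succ_apply', hxy, hy.2]
      have : t = D.root := eq_root_of_periodic D (Nat.succ_pos c) hper
      apply hy.1
      rw [← hxy, this, iterate_root]
  rcases le_total a b with hab | hab
  · exact hne (claim a b hab ha hb h1 h2)
  · exact hne ((claim b a hab hb ha h2 h1).symm)

lemma sameComp_mono {A B : Set V} {u v : V} (hAB : A ⊆ B) (h : SameComp G A u v) :
    SameComp G B u v := by
  obtain ⟨hu, hv, hr⟩ := h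
  refine ⟨hAB hu, hAB hv, ?_⟩
  let f : G.induce A →g G.induce B := ⟨Set.inclusion hAB, fun {a b} hab => hab⟩
  exact hr.map f

end RootedTreeDecompAux
lemma ncard_biUnion_le_aux {α β : Type*} {E : α → Set β} {m : ℕ}
    (S : Set α) (hS : S.Finite) (hm : ∀ s ∈ S, (E s).ncard ≤ m)
    (hfin : ∀ s, (E s).Finite) :
    (⋃ s ∈ S, E s).ncard ≤ S.ncard * m := by
  classical
  refine Set.Finite.induction_on
    (motive := fun S _ => (∀ s ∈ S, (E s).ncard ≤ m) → (⋃ s ∈ S, E s).ncard ≤ S.ncard * m)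
    S hS (by simp) ?_ hm
  intro a s ha hsf ih hm'
  rw [Set.biUnion_insert]
  calc (E a ∪ ⋃ x ∈ s, E x).ncard ≤ (E a).ncard + (⋃ x ∈ s, E x).ncard :=
        Set.ncard_union_le _ _
    _ ≤ m + s.ncard * m := by
        gcongr
        · exact hm' a (Set.mem_insert a s)
        · exact ih (fun x hx => hm' x (Set.mem_insert_of_mem a hx))
    _ = (insert a s).ncard * m := by
        rw [Set.ncard_insert_of_notMem ha hsf]; ring

lemma ncard_sym2_image_le {V : Type*} [Fintype V] {A : Set V} {h : ℕ}
    (hA : A.ncard ≤ h) : (Sym2.mk.uncurry '' (A ×ˢ A)).ncard ≤ h ^ 2 := by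
  classical
  calc (Sym2.mk.uncurry '' (A ×ˢ A)).ncard ≤ (A ×ˢ A).ncard :=
        Set.ncard_image_le (Set.toFinite _)
    _ = A.ncard * A.ncard := by
        simp only [← Nat.card_coe_set_eq]
        rw [Nat.card_congr (Equiv.Set.prod A A), Nat.card_prod]
    _ ≤ h ^ 2 := by rw [pow_two]; exact Nat.mul_le_mul hA hA

/-- Let `(T,β)` be a rooted tree decomposition of `G`, let `Z₁,…,Z_p` be a
partition of `V(G)`, fix `i` and `Z' ⊆ Z_i`, and suppose that for every node `t` and every
edge `uv` of `tor(t)[Z_i ∩ β(t)]`, the vertices `u, v` lie in the same connected component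
of `G[((γ(s) \ σ(s)) ∩ Z_i) ∪ {u,v}]` for every child `s` of `t` with `u,v ∈ σ(s)`.  If all
adhesions have size at most `h`, then for every node `t` the number of edges `uv` of
`tor(t)[(Z_i ∩ β(t)) \ Z']` whose endpoints lie in different connected components of
`G[Z_i \ Z']` is at most `h² · |Z'|`. -/
theorem few_unsafe_torso_edges
    {V ι : Type*} [Fintype V] {G : SimpleGraph V} (D : RootedTreeDecomp V ι G)
    (h p : ℕ) (Z : Fin p → Set V) (hpart : ∀ v : V, ∃! j : Fin p, v ∈ Z j)
    (hadh : ∀ t : ι, (D.adhesion t).ncard ≤ h)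
    (i : Fin p) (Z' : Set V) (hZ' : Z' ⊆ Z i)
    (hcon : ∀ (t : ι) (u v : V), (D.torso t).Adj u v → u ∈ Z i → v ∈ Z i →
      ∀ s : ι, D.IsChild s t → u ∈ D.adhesion s → v ∈ D.adhesion s →
        SameComp G (((D.subtreeBags s \ D.adhesion s) ∩ Z i) ∪ {u, v}) u v) :
    ∀ t : ι,
      {e : Sym2 V | ∃ u v : V, e = s(u, v) ∧ (D.torso t).Adj u v ∧
          u ∈ (Z i ∩ D.bag t) \ Z' ∧ v ∈ (Z i ∩ D.bag t) \ Z' ∧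
          ¬ SameComp G (Z i \ Z') u v}.ncard ≤ h ^ 2 * Z'.ncard := by
  classical
  intro t
  set Bad : Set (Sym2 V) := {e : Sym2 V | ∃ u v : V, e = s(u, v) ∧ (D.torso t).Adj u v ∧
      u ∈ (Z i ∩ D.bag t) \ Z' ∧ v ∈ (Z i ∩ D.bag t) \ Z' ∧
      ¬ SameComp G (Z i \ Z') u v} with hBadDef
  have key : ∀ e ∈ Bad, ∃ s, D.IsChild s t ∧
      ((D.subtreeBags s \ D.adhesion s) ∩ Z').Nonempty ∧
      ∃ u v : V, e = s(u, v) ∧ u ∈ D.adhesion s ∧ v ∈ D.adhesion s := by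
    rintro e ⟨u, v, rfl, hadj, hu, hv, hnsc⟩
    have huZ : u ∈ Z i \ Z' := ⟨hu.1.1, hu.2⟩
    have hvZ : v ∈ Z i \ Z' := ⟨hv.1.1, hv.2⟩
    rcases hadj.2.2.2 with hG | ⟨s, hchild, huσ, hvσ⟩
    · exact absurd ⟨huZ, hvZ, SimpleGraph.Adj.reachable
        (show (G.induce (Z i \ Z')).Adj ⟨u, huZ⟩ ⟨v, hvZ⟩ from hG)⟩ hnsc
    · refine ⟨s, hchild, ?_, u, v, rfl, huσ, hvσ⟩
      by_contra hemp
      have hsub : (((D.subtreeBags s \ D.adhesion s) ∩ Z i) ∪ {u, v}) ⊆ Z i \ Z' := by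
        rintro x (⟨hx1, hx2⟩ | hx)
        · exact ⟨hx2, fun hx' => hemp ⟨x, hx1, hx'⟩⟩
        · rcases hx with rfl | rfl
          exacts [huZ, hvZ]
      exact hnsc (RootedTreeDecompAux.sameComp_mono hsub
        (hcon t u v hadj hu.1.1 hv.1.1 s hchild huσ hvσ))
  set S : Set ι := {s | D.IsChild s t ∧ ((D.subtreeBags s \ D.adhesion s) ∩ Z').Nonempty}
    with hSdef
  set E : ι → Set (Sym2 V) := fun s => Sym2.mk.uncurry '' ((D.adhesion s) ×ˢ (D.adhesion s))
    with hEdef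
  have hsubU : Bad ⊆ ⋃ s ∈ S, E s := by
    intro e he
    obtain ⟨s, hchild, hnon, u, v, rfl, huσ, hvσ⟩ := key e he
    exact Set.mem_biUnion ⟨hchild, hnon⟩ ⟨(u, v), ⟨huσ, hvσ⟩, rfl⟩
  have hEcard : ∀ s, (E s).ncard ≤ h ^ 2 := fun s => ncard_sym2_image_le (hadh s)
  by_cases hSe : S = ∅
  · have : Bad = ∅ := by
      rw [hSe] at hsubU; simpa using hsubU
    rw [this]; simp
  · obtain ⟨s₀, hs₀⟩ := Set.nonempty_iff_ne_empty.2 hSe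
    obtain ⟨v₀, hv₀⟩ := hs₀.2
    set φ : ι → V := fun s =>
      if hs : ((D.subtreeBags s \ D.adhesion s) ∩ Z').Nonempty then hs.some else v₀
      with hφdef
    have hφmem : ∀ s ∈ S, φ s ∈ (D.subtreeBags s \ D.adhesion s) ∩ Z' := by
      intro s hs
      simp only [hφdef, dif_pos hs.2]
      exact hs.2.some_mem
    have hφZ' : ∀ s ∈ S, φ s ∈ Z' := fun s hs => (hφmem s hs).2
    have hφinj : Set.InjOn φ S := by
      intro s₁ h₁ s₂ h₂ heq
      by_contra hne
      exact RootedTreeDecompAux.disj_children D h₁.1 h₂.1 hne (hφmem s₁ h₁).1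
        (heq ▸ (hφmem s₂ h₂).1)
    have hSfin : S.Finite := by
      refine Set.Finite.of_finite_image ?_ hφinj
      exact (Set.toFinite Z').subset (by rintro _ ⟨s, hs, rfl⟩; exact hφZ' s hs)
    have hScard : S.ncard ≤ Z'.ncard :=
      Set.ncard_le_ncard_of_injOn φ hφZ' hφinj (Set.toFinite Z')
    calc Bad.ncard ≤ (⋃ s ∈ S, E s).ncard := Set.ncard_le_ncard hsubU (Set.toFinite _)
      _ ≤ S.ncard * h ^ 2 :=
          ncard_biUnion_le_aux S hSfin (fun s _ => hEcard s) (fun s => Set.toFinite _)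
      _ ≤ Z'.ncard * h ^ 2 := Nat.mul_le_mul_right _ hScard
      _ = h ^ 2 * Z'.ncard := Nat.mul_comm _ _
end
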